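/- Convergence of objective values for Algorithm 1: under Assumptions A and B, let {γ_ν} and {ε_ν} be positive sequences decreasing to 0 with Σ_{ν=0}^∞ γ_ν < ∞, let x₀ ∈ X, and let {x_ν} be produced by Algorithm 1: for each ν set x_{ν,0} = x_ν; for each i, take subproblem solutions (x^s_{ν,i}, y^s_{ν,i}, c^s_{ν,i}) at z = x_{ν,i} with parameter γ_ν for every scenario s, and let x_{ν,i+1} minimize x ↦ φ(x) + (1/S) Σ_{s=1}^S [ ‖x‖²/(2γ_ν) − ( ‖x_{ν,i}‖²/(2γ_ν) − e_{γ_ν}ψ_s(x_{ν,i}) ) − ⟨ x^s_{ν,i}/γ_ν + c^s_{ν,i}, x − x_{ν,i} ⟩ ] over X; let i_ν be the first index i with ‖x_{ν,i+1} − x_{ν,i}‖ ≤ ε_ν γ_ν (which is finite), and set x_{ν+1} = x_{ν,i_ν+1}. Define ζ̄_S(x) = φ(x) + (1/S) Σ_{s=1}^S ψ̄_s(x,x). Then the sequence { ζ̄_S(x_ν) } converges, and its limit equals ζ̄_S(x̄) for every accumulation point x̄ of {x_ν}. -/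

import Mathlib

open scoped RealInnerProductSpace
open Filter Topology

/-- The partial Moreau envelope of the recourse function:
`e_γψ(z) = inf { f(z,y) + ‖x - z‖²/(2γ) : x ∈ X̄, G(x,y) ≤ 0 }`. -/
noncomputable def penv {n₁ n₂ ℓ : ℕ}
    (Xb : Set (EuclideanSpace ℝ (Fin n₁)))
    (f : EuclideanSpace ℝ (Fin n₁) → EuclideanSpace ℝ (Fin n₂) → ℝ)
    (G : EuclideanSpace ℝ (Fin n₁) → EuclideanSpace ℝ (Fin n₂) → Fin ℓ → ℝ)
    (γ : ℝ) (z : EuclideanSpace ℝ (Fin n₁)) : ℝ :=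
  sInf {v : ℝ | ∃ x ∈ Xb, ∃ y : EuclideanSpace ℝ (Fin n₂),
    (∀ i, G x y i ≤ 0) ∧ v = f z y + ‖x - z‖ ^ 2 / (2 * γ)}

lemma aux_conv (a c : ℕ → ℝ) (h : ∀ n, a (n+1) ≤ a n + c n) (hc : ∀ n, 0 ≤ c n)
    (hs : Summable c) (m : ℝ) (hm : ∀ n, m ≤ a n) :
    ∃ L, Tendsto a atTop (𝓝 L) := by
  set t : ℕ → ℝ := fun n => ∑' k, c (k + n) with ht
  have htnn : ∀ n, 0 ≤ t n := fun n => tsum_nonneg fun k => hc _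
  have hrec : ∀ n, t n = c n + t (n+1) := by
    intro n
    have hsn : Summable fun k => c (k + n) := (summable_nat_add_iff n).2 hs
    have h0 := Summable.tsum_eq_zero_add hsn
    simp only [ht]
    rw [h0]
    congr 1
    · simp
    · exact tsum_congr fun k => by congr 1; omega
  have hanti : Antitone (fun n => a n + t n) := antitone_nat_of_succ_le fun n => by
    have h1 := h n; have h2 := hrec n; linarith
  have hbdd : BddBelow (Set.range fun n => a n + t n) := by
    refine ⟨m, ?_⟩
    rintro x ⟨n, rfl⟩
    have h1 := hm n; have h2 := htnn n; show m ≤ a n + t n; linarith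
  have hb := tendsto_atTop_ciInf hanti hbdd
  have ht0 : Tendsto t atTop (𝓝 0) := tendsto_sum_nat_add c
  exact ⟨_, by simpa using hb.sub ht0⟩


theorem stmt16 {n₁ n₂ ℓ S : ℕ} (hS : 0 < S)
    (φ : EuclideanSpace ℝ (Fin n₁) → ℝ) (hφ : ConvexOn ℝ Set.univ φ)
    (X Xb : Set (EuclideanSpace ℝ (Fin n₁)))
    (hXne : X.Nonempty) (hXconv : Convex ℝ X) (hXcomp : IsCompact X)
    (hXbne : Xb.Nonempty) (hXbconv : Convex ℝ Xb) (hXbcomp : IsCompact Xb)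
    (hXint : X ⊆ interior Xb)
    (f : Fin S → EuclideanSpace ℝ (Fin n₁) → EuclideanSpace ℝ (Fin n₂) → ℝ)
    (hfconc : ∀ s y, ConcaveOn ℝ Set.univ (fun x => f s x y))
    (hfconv : ∀ s x, ConvexOn ℝ Set.univ (fun y => f s x y))
    (G : Fin S → EuclideanSpace ℝ (Fin n₁) → EuclideanSpace ℝ (Fin n₂) → Fin ℓ → ℝ)
    (hG : ∀ s i, ConvexOn ℝ Set.univ
      (fun p : EuclideanSpace ℝ (Fin n₁) × EuclideanSpace ℝ (Fin n₂) => G s p.1 p.2 i))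
    (ψb : Fin S → EuclideanSpace ℝ (Fin n₁) → EuclideanSpace ℝ (Fin n₁) → ℝ)
    (hA : ∀ s, ∀ x ∈ Xb, ∀ z ∈ Xb, ∃ y : EuclideanSpace ℝ (Fin n₂),
      (∀ i, G s x y i ≤ 0) ∧ ψb s x z = f s z y ∧
      ∀ y' : EuclideanSpace ℝ (Fin n₂), (∀ i, G s x y' i ≤ 0) → ψb s x z ≤ f s z y')
    (κ : Fin S → ℝ) (hκ : ∀ s, 0 ≤ κ s)
    (hB : ∀ s, ∀ z ∈ X, ∀ x₁ ∈ Xb, ∀ x₂ ∈ Xb,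
      |ψb s x₁ z - ψb s x₂ z| ≤ κ s * ‖x₁ - x₂‖)
    (γseq εseq : ℕ → ℝ)
    (hγpos : ∀ ν, 0 < γseq ν) (hγanti : Antitone γseq)
    (hγ0 : Tendsto γseq atTop (𝓝 0))
    (hεpos : ∀ ν, 0 < εseq ν) (hεanti : Antitone εseq)
    (hε0 : Tendsto εseq atTop (𝓝 0))
    (xν : ℕ → EuclideanSpace ℝ (Fin n₁)) (hx0 : xν 0 ∈ X)
    (xi : ℕ → ℕ → EuclideanSpace ℝ (Fin n₁))
    (hinit : ∀ ν, xi ν 0 = xν ν)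
    (xs : ℕ → ℕ → Fin S → EuclideanSpace ℝ (Fin n₁))
    (ys : ℕ → ℕ → Fin S → EuclideanSpace ℝ (Fin n₂))
    (cs : ℕ → ℕ → Fin S → EuclideanSpace ℝ (Fin n₁))
    (hxsmem : ∀ ν i s, xs ν i s ∈ Xb)
    (hfeas : ∀ ν i s j, G s (xs ν i s) (ys ν i s) j ≤ 0)
    (hmin : ∀ ν i s, ∀ x ∈ Xb, ∀ y : EuclideanSpace ℝ (Fin n₂), (∀ j, G s x y j ≤ 0) →
      f s (xi ν i) (ys ν i s) + ‖xs ν i s - xi ν i‖ ^ 2 / (2 * γseq ν)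
        ≤ f s (xi ν i) y + ‖x - xi ν i‖ ^ 2 / (2 * γseq ν))
    (hcs : ∀ ν i s, ∀ z' : EuclideanSpace ℝ (Fin n₁),
      -f s z' (ys ν i s) ≥ -f s (xi ν i) (ys ν i s) + ⟪cs ν i s, z' - xi ν i⟫)
    (hmasterX : ∀ ν i, xi ν (i + 1) ∈ X)
    (hmaster : ∀ ν i, ∀ x ∈ X,
      φ (xi ν (i + 1)) + (1 / (S : ℝ)) * ∑ s : Fin S,
        (‖xi ν (i + 1)‖ ^ 2 / (2 * γseq ν)
          - (‖xi ν i‖ ^ 2 / (2 * γseq ν) - penv Xb (f s) (G s) (γseq ν) (xi ν i))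
          - ⟪(1 / γseq ν) • xs ν i s + cs ν i s, xi ν (i + 1) - xi ν i⟫)
      ≤ φ x + (1 / (S : ℝ)) * ∑ s : Fin S,
        (‖x‖ ^ 2 / (2 * γseq ν)
          - (‖xi ν i‖ ^ 2 / (2 * γseq ν) - penv Xb (f s) (G s) (γseq ν) (xi ν i))
          - ⟪(1 / γseq ν) • xs ν i s + cs ν i s, x - xi ν i⟫))
    (iν : ℕ → ℕ)
    (hstop : ∀ ν, ‖xi ν (iν ν + 1) - xi ν (iν ν)‖ ≤ εseq ν * γseq ν)
    (hleast : ∀ ν, ∀ j < iν ν, εseq ν * γseq ν < ‖xi ν (j + 1) - xi ν j‖)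
    (hnext : ∀ ν, xν (ν + 1) = xi ν (iν ν + 1))
    (hsum : Summable γseq) :
    ∃ L : ℝ,
      Tendsto (fun ν => φ (xν ν) + (1 / (S : ℝ)) * ∑ s : Fin S, ψb s (xν ν) (xν ν))
        atTop (𝓝 L) ∧
      ∀ xbar : EuclideanSpace ℝ (Fin n₁),
        (∃ σ : ℕ → ℕ, StrictMono σ ∧ Tendsto (fun k => xν (σ k)) atTop (𝓝 xbar)) →
        φ xbar + (1 / (S : ℝ)) * ∑ s : Fin S, ψb s xbar xbar = L := by
  have hSpos : (0:ℝ) < S := by exact_mod_cast hS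
  have hXsub : X ⊆ Xb := fun x hx => interior_subset (hXint hx)
  -- all iterates lie in X
  have hxXmem : ∀ ν, xν ν ∈ X := by
    intro ν
    induction ν with
    | zero => exact hx0
    | succ n _ => rw [hnext]; exact hmasterX n _
  have hxiX : ∀ ν i, xi ν i ∈ X := by
    intro ν i
    cases i with
    | zero => rw [hinit]; exact hxXmem ν
    | succ j => exact hmasterX ν j
  -- the attained subproblem value
  set E : ℕ → ℕ → Fin S → ℝ := fun ν i s =>
    f s (xi ν i) (ys ν i s) + ‖xs ν i s - xi ν i‖ ^ 2 / (2 * γseq ν) with hE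
  have penv_eq : ∀ ν i s, penv Xb (f s) (G s) (γseq ν) (xi ν i) = E ν i s := by
    intro ν i s
    apply IsLeast.csInf_eq
    constructor
    · exact ⟨xs ν i s, hxsmem ν i s, ys ν i s, hfeas ν i s, rfl⟩
    · rintro v ⟨x, hx, y, hy, rfl⟩
      exact hmin ν i s x hx y hy
  -- (I): E ≤ ψb at the same point
  have hI : ∀ ν i s, E ν i s ≤ ψb s (xi ν i) (xi ν i) := by
    intro ν i s
    obtain ⟨y, hyf, hyeq, -⟩ :=
      hA s (xi ν i) (hXsub (hxiX ν i)) (xi ν i) (hXsub (hxiX ν i))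
    have h1 := hmin ν i s (xi ν i) (hXsub (hxiX ν i)) y hyf
    rw [sub_self] at h1
    simp only [norm_zero] at h1
    rw [hyeq]
    calc E ν i s ≤ f s (xi ν i) y + 0 ^ 2 / (2 * γseq ν) := h1
    _ = f s (xi ν i) y := by
        have := (hγpos ν).ne'
        field_simp
        ring
  -- (II): ψb ≤ E + κ²γ/2
  have hII : ∀ ν i s, ψb s (xi ν i) (xi ν i) ≤ E ν i s + (κ s)^2 * γseq ν / 2 := by
    intro ν i s
    set z := xi ν i
    set x := xs ν i s
    have hzX : z ∈ X := hxiX ν i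
    have hzXb : z ∈ Xb := hXsub hzX
    have hxXb : x ∈ Xb := hxsmem ν i s
    have hb := hB s z hzX z hzXb x hxXb
    have h1 : ψb s z z ≤ ψb s x z + κ s * ‖z - x‖ := by
      have := abs_le.1 hb
      linarith [this.2]
    obtain ⟨y, hyf, hyeq, hymin⟩ := hA s x hxXb z hzXb
    have h2 : ψb s x z ≤ f s z (ys ν i s) := hymin (ys ν i s) (hfeas ν i s)
    have hnormeq : ‖z - x‖ = ‖x - z‖ := norm_sub_rev z x
    have hγ := hγpos ν
    have key : κ s * ‖x - z‖ ≤ ‖x - z‖^2 / (2 * γseq ν) + (κ s)^2 * γseq ν / 2 := by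
      have hq : (0:ℝ) ≤ (‖x - z‖ - κ s * γseq ν)^2 / (2 * γseq ν) := by positivity
      have heq : (‖x - z‖ - κ s * γseq ν)^2 / (2 * γseq ν)
          = ‖x - z‖^2 / (2 * γseq ν) + (κ s)^2 * γseq ν / 2 - κ s * ‖x - z‖ := by
        field_simp
        ring
      linarith [heq ▸ hq]
    rw [hnormeq] at h1
    simp only [hE]
    linarith
  -- (III): surrogate term at the next iterate dominates the next E
  have hIII : ∀ ν i s,
      E ν (i+1) s ≤ ‖xi ν (i + 1)‖ ^ 2 / (2 * γseq ν)
        - (‖xi ν i‖ ^ 2 / (2 * γseq ν) - penv Xb (f s) (G s) (γseq ν) (xi ν i))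
        - ⟪(1 / γseq ν) • xs ν i s + cs ν i s, xi ν (i + 1) - xi ν i⟫ := by
    intro ν i s
    rw [penv_eq]
    set z := xi ν i
    set x := xi ν (i+1)
    set u := xs ν i s
    set c := cs ν i s
    have hγ := (hγpos ν).ne'
    have hip : ⟪(1 / γseq ν) • u + c, x - z⟫
        = (1 / γseq ν) * (⟪u, x⟫ - ⟪u, z⟫) + ⟪c, x - z⟫ := by
      rw [inner_add_left, real_inner_smul_left, inner_sub_right]
    have hn1 : ‖u - z‖^2 = ‖u‖^2 - 2*⟪u, z⟫ + ‖z‖^2 := norm_sub_sq_real u z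
    have hn2 : ‖u - x‖^2 = ‖u‖^2 - 2*⟪u, x⟫ + ‖x‖^2 := norm_sub_sq_real u x
    have key : ‖x‖ ^ 2 / (2 * γseq ν)
        - (‖z‖ ^ 2 / (2 * γseq ν) - E ν i s)
        - ⟪(1 / γseq ν) • u + c, x - z⟫
        = f s z (ys ν i s) + ‖u - x‖^2 / (2 * γseq ν) - ⟪c, x - z⟫ := by
      simp only [hE, hip]
      rw [show xi ν i = z from rfl, show xs ν i s = u from rfl, hn1, hn2]
      field_simp
      ring
    rw [key]
    have h2 : f s x (ys ν i s) ≤ f s z (ys ν i s) - ⟪c, x - z⟫ := by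
      have := hcs ν i s x
      linarith
    have h3 : E ν (i+1) s ≤ f s x (ys ν i s) + ‖u - x‖^2 / (2 * γseq ν) :=
      hmin ν (i+1) s u (hxsmem ν i s) (ys ν i s) (hfeas ν i s)
    linarith
  -- inner-loop monotonicity of the surrogate value Q ν i = φ(x_i) + (1/S) ∑ E
  have hstep : ∀ ν i, φ (xi ν (i+1)) + (1 / (S:ℝ)) * ∑ s : Fin S, E ν (i+1) s
      ≤ φ (xi ν i) + (1 / (S:ℝ)) * ∑ s : Fin S, E ν i s := by
    intro ν i
    have hm := hmaster ν i (xi ν i) (hxiX ν i)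
    have hRHS : (∑ s : Fin S,
        (‖xi ν i‖ ^ 2 / (2 * γseq ν)
          - (‖xi ν i‖ ^ 2 / (2 * γseq ν) - penv Xb (f s) (G s) (γseq ν) (xi ν i))
          - ⟪(1 / γseq ν) • xs ν i s + cs ν i s, xi ν i - xi ν i⟫))
        = ∑ s : Fin S, E ν i s := by
      refine Finset.sum_congr rfl fun s _ => ?_
      rw [penv_eq, sub_self, inner_zero_right]
      ring
    rw [hRHS] at hm
    have hL : (∑ s : Fin S, E ν (i+1) s) ≤ ∑ s : Fin S,
        (‖xi ν (i + 1)‖ ^ 2 / (2 * γseq ν)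
          - (‖xi ν i‖ ^ 2 / (2 * γseq ν) - penv Xb (f s) (G s) (γseq ν) (xi ν i))
          - ⟪(1 / γseq ν) • xs ν i s + cs ν i s, xi ν (i + 1) - xi ν i⟫) :=
      Finset.sum_le_sum fun s _ => hIII ν i s
    have hinv : (0:ℝ) ≤ 1 / (S:ℝ) := by positivity
    nlinarith [mul_le_mul_of_nonneg_left hL hinv]
  have hQmono : ∀ ν i, φ (xi ν i) + (1 / (S:ℝ)) * ∑ s : Fin S, E ν i s
      ≤ φ (xi ν 0) + (1 / (S:ℝ)) * ∑ s : Fin S, E ν 0 s := by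
    intro ν i
    induction i with
    | zero => exact le_rfl
    | succ j ih => exact le_trans (hstep ν j) ih
  -- the objective
  set Z : EuclideanSpace ℝ (Fin n₁) → ℝ :=
    fun x => φ x + (1 / (S:ℝ)) * ∑ s : Fin S, ψb s x x with hZ
  set C : ℝ := (1 / (S:ℝ)) * ∑ s : Fin S, (κ s)^2 / 2 with hC
  have hCnn : 0 ≤ C := by positivity
  -- approximate descent
  have hdesc : ∀ ν, Z (xν (ν+1)) ≤ Z (xν ν) + C * γseq ν := by
    intro ν
    have hinv : (0:ℝ) ≤ 1 / (S:ℝ) := by positivity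
    have h1 : Z (xν (ν+1)) ≤ φ (xi ν (iν ν + 1))
        + (1 / (S:ℝ)) * ∑ s : Fin S, E ν (iν ν + 1) s + C * γseq ν := by
      rw [hnext]
      have hsum1 : (∑ s : Fin S, ψb s (xi ν (iν ν + 1)) (xi ν (iν ν + 1)))
          ≤ ∑ s : Fin S, (E ν (iν ν + 1) s + (κ s)^2 * γseq ν / 2) :=
        Finset.sum_le_sum fun s _ => hII ν (iν ν + 1) s
      have := mul_le_mul_of_nonneg_left hsum1 hinv
      simp only [hZ, hC]
      rw [Finset.sum_add_distrib] at this
      have hc2 : (1 / (S:ℝ)) * ∑ s : Fin S, (κ s)^2 * γseq ν / 2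
          = ((1 / (S:ℝ)) * ∑ s : Fin S, (κ s)^2 / 2) * γseq ν := by
        rw [Finset.mul_sum, Finset.mul_sum, Finset.sum_mul]
        exact Finset.sum_congr rfl fun s _ => by ring
      linarith [this]
    have h2 : φ (xν ν) + (1 / (S:ℝ)) * ∑ s : Fin S, E ν 0 s ≤ Z (xν ν) := by
      have hsum2 : (∑ s : Fin S, E ν 0 s) ≤ ∑ s : Fin S, ψb s (xν ν) (xν ν) := by
        have h : (∑ s : Fin S, E ν 0 s) ≤ ∑ s : Fin S, ψb s (xi ν 0) (xi ν 0) :=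
          Finset.sum_le_sum fun s _ => hI ν 0 s
        rwa [hinit] at h
      have hmul := mul_le_mul_of_nonneg_left hsum2 hinv
      simp only [hZ]
      linarith
    have hq := hQmono ν (iν ν + 1)
    rw [hinit] at hq
    calc Z (xν (ν+1))
        ≤ φ (xi ν (iν ν + 1)) + (1 / (S:ℝ)) * ∑ s : Fin S, E ν (iν ν + 1) s
          + C * γseq ν := h1
      _ ≤ (φ (xν ν) + (1 / (S:ℝ)) * ∑ s : Fin S, E ν 0 s) + C * γseq ν := by
          linarith
      _ ≤ Z (xν ν) + C * γseq ν := by linarith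
  -- continuity of Z on X
  have hφcont : Continuous φ := by
    rw [← continuousOn_univ]
    exact hφ.continuousOn isOpen_univ
  have hψcont : ∀ s : Fin S, ∀ p ∈ X, ContinuousWithinAt (fun x => ψb s x x) X p := by
    intro s p hp
    have hpXb : p ∈ Xb := hXsub hp
    -- concavity of z ↦ ψb s p z on Xb
    have hconc : ConcaveOn ℝ Xb (fun z => ψb s p z) := by
      refine ⟨hXbconv, ?_⟩
      intro z₁ h₁ z₂ h₂ a b ha hb hab
      obtain ⟨y, hyf, hyeq, -⟩ := hA s p hpXb (a • z₁ + b • z₂) (hXbconv h₁ h₂ ha hb hab)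
      obtain ⟨y₁, -, -, hy₁min⟩ := hA s p hpXb z₁ h₁
      obtain ⟨y₂, -, -, hy₂min⟩ := hA s p hpXb z₂ h₂
      have e1 : ψb s p z₁ ≤ f s z₁ y := hy₁min y hyf
      have e2 : ψb s p z₂ ≤ f s z₂ y := hy₂min y hyf
      have hcv := (hfconc s y).2 (Set.mem_univ z₁) (Set.mem_univ z₂) ha hb hab
      simp only [smul_eq_mul] at hcv ⊢
      rw [hyeq]
      nlinarith [mul_le_mul_of_nonneg_left e1 ha, mul_le_mul_of_nonneg_left e2 hb]
    have gcont : ContinuousOn (fun z => ψb s p z) (interior Xb) :=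
      hconc.continuousOn_interior
    have gat : ContinuousAt (fun z => ψb s p z) p :=
      gcont.continuousAt (isOpen_interior.mem_nhds (hXint hp))
    -- squeeze
    have hbound : ∀ x ∈ X, |ψb s x x - ψb s p p|
        ≤ κ s * ‖x - p‖ + |ψb s p x - ψb s p p| := by
      intro x hx
      have h1 : |ψb s x x - ψb s p x| ≤ κ s * ‖x - p‖ :=
        hB s x hx x (hXsub hx) p hpXb
      calc |ψb s x x - ψb s p p|
          ≤ |ψb s x x - ψb s p x| + |ψb s p x - ψb s p p| := abs_sub_le _ _ _
        _ ≤ κ s * ‖x - p‖ + |ψb s p x - ψb s p p| := by linarith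
    have hbt : Tendsto (fun x => κ s * ‖x - p‖ + |ψb s p x - ψb s p p|) (𝓝[X] p) (𝓝 0) := by
      have t1 : Tendsto (fun x : EuclideanSpace ℝ (Fin n₁) => κ s * ‖x - p‖) (𝓝[X] p) (𝓝 0) := by
        have : Tendsto (fun x : EuclideanSpace ℝ (Fin n₁) => κ s * ‖x - p‖) (𝓝 p) (𝓝 (κ s * ‖p - p‖)) :=
          (continuous_const.mul ((continuous_id.sub continuous_const).norm)).tendsto p
        simpa using this.mono_left nhdsWithin_le_nhds
      have t2 : Tendsto (fun x => |ψb s p x - ψb s p p|) (𝓝[X] p) (𝓝 0) := by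
        have : Tendsto (fun x => ψb s p x - ψb s p p) (𝓝 p) (𝓝 (ψb s p p - ψb s p p)) :=
          gat.sub tendsto_const_nhds
        rw [sub_self] at this
        have habs := this.abs
        rw [abs_zero] at habs
        exact habs.mono_left nhdsWithin_le_nhds
      simpa using t1.add t2
    have hsq : Tendsto (fun x => ψb s x x - ψb s p p) (𝓝[X] p) (𝓝 0) := by
      apply squeeze_zero_norm' _ hbt
      filter_upwards [self_mem_nhdsWithin] with x hx
      exact hbound x hx
    have := hsq.add (tendsto_const_nhds (x := ψb s p p))
    simpa [ContinuousWithinAt] using this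
  have hZcont : ContinuousOn Z X := by
    intro p hp
    have h1 : Tendsto (fun x => ∑ s : Fin S, ψb s x x) (𝓝[X] p)
        (𝓝 (∑ s : Fin S, ψb s p p)) :=
      tendsto_finset_sum _ fun s _ => hψcont s p hp
    exact (hφcont.continuousAt.continuousWithinAt).add (h1.const_mul _)
  -- lower bound
  obtain ⟨pm, hpmX, hpmmin⟩ := hXcomp.exists_isMinOn hXne hZcont
  -- convergence
  obtain ⟨L, hL⟩ := aux_conv (fun ν => Z (xν ν)) (fun ν => C * γseq ν)
    hdesc (fun ν => mul_nonneg hCnn (hγpos ν).le) (hsum.mul_left C) (Z pm)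
    (fun ν => isMinOn_iff.mp hpmmin _ (hxXmem ν))
  refine ⟨L, hL, ?_⟩
  rintro xbar ⟨σ, hσmono, hσtend⟩
  have hmemseq : ∀ k, xν (σ k) ∈ X := fun k => hxXmem (σ k)
  have hxbarX : xbar ∈ X :=
    hXcomp.isClosed.mem_of_tendsto hσtend (Eventually.of_forall hmemseq)
  have h1 : Tendsto (fun k => Z (xν (σ k))) atTop (𝓝 (Z xbar)) :=
    (hZcont xbar hxbarX).tendsto.comp
      (tendsto_nhdsWithin_of_tendsto_nhds_of_eventually_within _ hσtend
        (Eventually.of_forall hmemseq))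
  have h2 : Tendsto (fun k => Z (xν (σ k))) atTop (𝓝 L) :=
    hL.comp hσmono.tendsto_atTop
  exact tendsto_nhds_unique h1 h2
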